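/- Let X be a nonnegative real random variable whose law has a density (so that P(X = 0) = 0), with cumulative distribution function F(t) = P(X ≤ t), and let p > 0, q > 0. Then the average symbol error probability E[p · Q(√(2 q X))] equals (p √q / (2 √π)) ∫₀^∞ e^{-q t} t^{-1/2} F(t) dt, where Q(x) = (1/√(2π)) ∫_x^∞ e^{-s²/2} ds is the Gaussian Q-function. -/

import Mathlib

open MeasureTheory Real Set
open scoped ENNReal

/-- The Gaussian Q-function `Q(x) = (1/√(2π)) ∫_x^∞ e^(-s²/2) ds`. -/
noncomputable def gaussQ (x : ℝ) : ℝ :=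
  (1 / Real.sqrt (2 * π)) * ∫ s in Set.Ioi x, Real.exp (-s ^ 2 / 2)

lemma expsq_integrable : Integrable (fun s : ℝ => Real.exp (-s ^ 2 / 2)) := by
  have h := integrable_exp_neg_mul_sq (by norm_num : (0:ℝ) < 1/2)
  convert h using 2 with s
  ring_nf

lemma gaussQ_nonneg (x : ℝ) : 0 ≤ gaussQ x := by
  unfold gaussQ
  have : 0 ≤ ∫ s in Set.Ioi x, Real.exp (-s ^ 2 / 2) :=
    setIntegral_nonneg measurableSet_Ioi fun s _ => (Real.exp_pos _).le
  positivity

lemma gaussQ_antitone : Antitone gaussQ := by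
  intro a b hab
  unfold gaussQ
  have hc : 0 ≤ 1 / Real.sqrt (2 * π) := by positivity
  refine mul_le_mul_of_nonneg_left ?_ hc
  refine setIntegral_mono_set expsq_integrable.integrableOn ?_ ?_
  · filter_upwards with s using (Real.exp_pos _).le
  · exact HasSubset.Subset.eventuallyLE (Ioi_subset_Ioi hab)

/-- The density integrand `g_q(t) = e^{-qt} t^{-1/2}`. -/
noncomputable def gfun (q t : ℝ) : ℝ := Real.exp (-q * t) * t ^ (-(1:ℝ)/2)

lemma gfun_zero_of_nonpos (q : ℝ) {t : ℝ} (ht : t ≤ 0) : gfun q t = 0 := by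
  unfold gfun
  rcases lt_or_eq_of_le ht with h | h
  · rw [Real.rpow_def_of_neg h]
    have h2 : (-(1:ℝ)/2) * π = -(π/2) := by ring
    rw [h2, Real.cos_neg, Real.cos_pi_div_two, mul_zero, mul_zero]
  · rw [h, Real.zero_rpow (by norm_num), mul_zero]

lemma gfun_nonneg (q t : ℝ) : 0 ≤ gfun q t := by
  rcases le_or_gt t 0 with h | h
  · rw [gfun_zero_of_nonpos q h]
  · exact mul_nonneg (Real.exp_pos _).le (Real.rpow_nonneg h.le _)

lemma gfun_measurable (q : ℝ) : Measurable (gfun q) := by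
  unfold gfun
  fun_prop

lemma gfun_integrableOn (q : ℝ) (hq : 0 < q) : IntegrableOn (gfun q) (Ioi 0) := by
  have h := integrableOn_rpow_mul_exp_neg_mul_rpow (p := 1) (s := -(1:ℝ)/2) (b := q)
    (by norm_num) (by norm_num) hq
  refine h.congr_fun (fun t ht => ?_) measurableSet_Ioi
  beta_reduce
  rw [Real.rpow_one, mul_comm]
  rfl

lemma lemA (p q : ℝ) (hq : 0 < q) {x : ℝ} (hx : 0 ≤ x) :
    p * gaussQ (Real.sqrt (2 * q * x)) =
      ∫ t in Set.Ioi x, (p * Real.sqrt q / (2 * Real.sqrt π)) * gfun q t := by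
  set a := Real.sqrt (2 * q * x) with ha
  have ha0 : 0 ≤ a := Real.sqrt_nonneg _
  have ha2 : a ^ 2 = 2 * q * x := Real.sq_sqrt (by positivity)
  have himg : (fun s : ℝ => s ^ 2 / (2 * q)) '' Ioi a = Ioi x := by
    ext t
    simp only [mem_image, mem_Ioi]
    constructor
    · rintro ⟨s, hs, rfl⟩
      have h1 : a ^ 2 < s ^ 2 := by nlinarith
      rw [lt_div_iff₀ (by positivity)]
      nlinarith
    · intro ht
      refine ⟨Real.sqrt (2 * q * t), ?_, ?_⟩
      · rw [ha]
        exact Real.sqrt_lt_sqrt (by positivity) (by nlinarith)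
      · rw [Real.sq_sqrt (by nlinarith)]
        field_simp
  have hderiv : ∀ s ∈ Ioi a, HasDerivWithinAt (fun s : ℝ => s ^ 2 / (2 * q)) (s / q) (Ioi a) s := by
    intro s _
    have h := (hasDerivAt_pow 2 s).div_const (2 * q)
    have h2 : ((2 : ℕ) : ℝ) * s ^ (2 - 1) / (2 * q) = s / q := by
      push_cast
      field_simp
    rw [h2] at h
    exact h.hasDerivWithinAt
  have hinj : InjOn (fun s : ℝ => s ^ 2 / (2 * q)) (Ioi a) := by
    intro s1 hs1 s2 hs2 h
    simp only [mem_Ioi] at hs1 hs2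
    have h2 : s1 ^ 2 = s2 ^ 2 := by
      field_simp at h
      linarith
    nlinarith
  rw [← himg, integral_image_eq_integral_abs_deriv_smul measurableSet_Ioi hderiv hinj]
  have hcong : ∀ s ∈ Ioi a, |s / q| • ((p * Real.sqrt q / (2 * Real.sqrt π)) *
      gfun q (s ^ 2 / (2 * q)))
      = (p * (1 / Real.sqrt (2 * π))) * Real.exp (-s ^ 2 / 2) := by
    intro s hs
    have hs0 : 0 < s := lt_of_le_of_lt ha0 hs
    unfold gfun
    have hexp : -q * (s ^ 2 / (2 * q)) = -s ^ 2 / 2 := by field_simp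
    have hrpow : (s ^ 2 / (2 * q)) ^ (-(1:ℝ)/2) = Real.sqrt (2 * q) / s := by
      rw [show (-(1:ℝ)/2) = -(1/2) by norm_num, Real.rpow_neg (by positivity),
        ← Real.sqrt_eq_rpow, Real.sqrt_div (by positivity) _, Real.sqrt_sq hs0.le]
      field_simp
    rw [hexp, hrpow, smul_eq_mul, abs_of_pos (by positivity)]
    have h2q : Real.sqrt (2 * q) = Real.sqrt 2 * Real.sqrt q := Real.sqrt_mul (by norm_num) q
    have h2pi : Real.sqrt (2 * π) = Real.sqrt 2 * Real.sqrt π := Real.sqrt_mul (by norm_num) π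
    have hqq : Real.sqrt q * Real.sqrt q = q := Real.mul_self_sqrt hq.le
    have h22 : Real.sqrt 2 * Real.sqrt 2 = 2 := Real.mul_self_sqrt (by norm_num)
    have hsq : Real.sqrt q ≠ 0 := by positivity
    have hs2 : Real.sqrt 2 ≠ 0 := by positivity
    have hspi : Real.sqrt π ≠ 0 := by positivity
    rw [h2q, h2pi]
    field_simp
    linear_combination (p * Real.sqrt 2 * Real.sqrt 2) * hqq +
      (p * q) * h22
  rw [setIntegral_congr_fun measurableSet_Ioi hcong, integral_const_mul]
  unfold gaussQ
  ring

/-- From the Q-function to an integral of `gfun` over `Ioi x`, in `ℝ≥0∞` form. -/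
lemma keyLemma (p q : ℝ) (hp : 0 < p) (hq : 0 < q) {x : ℝ} (hx : 0 ≤ x) :
    ENNReal.ofReal (p * gaussQ (Real.sqrt (2 * q * x))) =
      ∫⁻ t in Set.Ioi x, ENNReal.ofReal ((p * Real.sqrt q / (2 * Real.sqrt π)) * gfun q t) := by
  have hc0 : 0 ≤ p * Real.sqrt q / (2 * Real.sqrt π) := by positivity
  have hint0 : IntegrableOn (fun t => (p * Real.sqrt q / (2 * Real.sqrt π)) * gfun q t) (Ioi 0) :=
    (gfun_integrableOn q hq).const_mul _
  have hint : IntegrableOn (fun t => (p * Real.sqrt q / (2 * Real.sqrt π)) * gfun q t) (Ioi x) :=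
    hint0.mono_set (Ioi_subset_Ioi hx)
  have hnn : 0 ≤ᵐ[volume.restrict (Ioi x)]
      fun t => (p * Real.sqrt q / (2 * Real.sqrt π)) * gfun q t :=
    ae_of_all _ fun t => mul_nonneg hc0 (gfun_nonneg q t)
  rw [lemA p q hq hx, ← ofReal_integral_eq_lintegral_ofReal hint hnn]

theorem asep_cdf_form
    {Ω : Type*} [MeasurableSpace Ω] (P : Measure Ω) [IsProbabilityMeasure P]
    (X : Ω → ℝ) (hXmeas : Measurable X) (hXnn : ∀ ω, 0 ≤ X ω)
    (f : ℝ → ℝ≥0∞) (hfmeas : Measurable f)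
    (hlaw : Measure.map X P = volume.withDensity f)
    (p q : ℝ) (hp : 0 < p) (hq : 0 < q) :
    (∫ ω, p * gaussQ (Real.sqrt (2 * q * X ω)) ∂P) =
      (p * Real.sqrt q / (2 * Real.sqrt π)) *
        ∫ t in Set.Ioi (0 : ℝ),
          Real.exp (-q * t) * t ^ (-(1 : ℝ) / 2) * (P {ω | X ω ≤ t}).toReal := by
  have hπ : 0 < π := Real.pi_pos
  set μ := Measure.map X P with hμdef
  haveI : IsProbabilityMeasure μ := Measure.isProbabilityMeasure_map hXmeas.aemeasurable
  set c : ℝ := p * Real.sqrt q / (2 * Real.sqrt π) with hcdef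
  have hc0 : 0 ≤ c := by positivity
  set G : ℝ → ℝ≥0∞ := fun t => ENNReal.ofReal (c * gfun q t) with hGdef
  have hGmeas : Measurable G :=
    ENNReal.measurable_ofReal.comp ((gfun_measurable q).const_mul c)
  -- measure facts
  have hsing : ∀ t : ℝ, μ {t} = 0 := by
    intro t
    rw [hlaw, withDensity_apply _ (measurableSet_singleton t),
      Measure.restrict_eq_zero.mpr (by simp), lintegral_zero_measure]
  have hIic : ∀ t : ℝ, μ (Iic t) = μ (Iio t) := by
    intro t
    refine le_antisymm ?_ (measure_mono Iio_subset_Iic_self)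
    rw [← Iio_union_right]
    calc μ (Iio t ∪ {t}) ≤ μ (Iio t) + μ {t} := measure_union_le _ _
      _ = μ (Iio t) := by rw [hsing, add_zero]
  have hXF : ∀ t : ℝ, P {ω | X ω ≤ t} = μ (Iic t) := by
    intro t
    rw [hμdef, Measure.map_apply hXmeas measurableSet_Iic]
    rfl
  have haenn : ∀ᵐ x ∂μ, 0 ≤ x := by
    rw [ae_iff]
    have h1 : {x : ℝ | ¬ 0 ≤ x} = Iio 0 := by ext y; simp [not_le]
    rw [h1, hμdef, Measure.map_apply hXmeas measurableSet_Iio]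
    have h2 : X ⁻¹' Iio 0 = ∅ := by
      ext ω; simp [not_lt.2 (hXnn ω)]
    rw [h2, measure_empty]
  have hμIio_mono : Monotone fun t : ℝ => μ (Iio t) := fun s t hst =>
    measure_mono (Iio_subset_Iio hst)
  have hμIio_meas : Measurable fun t : ℝ => μ (Iio t) := hμIio_mono.measurable
  have hQmeas : Measurable fun ω => p * gaussQ (Real.sqrt (2 * q * X ω)) := by
    have h1 : Measurable fun ω => Real.sqrt (2 * q * X ω) :=
      Real.continuous_sqrt.measurable.comp (hXmeas.const_mul (2 * q))
    exact (gaussQ_antitone.measurable.comp h1).const_mul p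
  have hQmeas' : Measurable fun x : ℝ => ENNReal.ofReal (p * gaussQ (Real.sqrt (2 * q * x))) := by
    have h1 : Measurable fun x : ℝ => Real.sqrt (2 * q * x) :=
      Real.continuous_sqrt.measurable.comp (measurable_id.const_mul (2 * q))
    exact ENNReal.measurable_ofReal.comp ((gaussQ_antitone.measurable.comp h1).const_mul p)
  -- the RHS chain
  have hFmono : Monotone fun t : ℝ => (μ (Iic t)).toReal := fun s t hst =>
    ENNReal.toReal_mono (measure_ne_top μ _) (measure_mono (Iic_subset_Iic.mpr hst))
  have hR1 : ∫ t in Ioi (0:ℝ), Real.exp (-q * t) * t ^ (-(1 : ℝ) / 2) * (P {ω | X ω ≤ t}).toReal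
      = (∫⁻ t in Ioi (0:ℝ), ENNReal.ofReal (gfun q t * (μ (Iic t)).toReal)).toReal := by
    simp_rw [hXF]
    unfold gfun
    refine integral_eq_lintegral_of_nonneg_ae ?_ ?_
    · exact ae_of_all _ fun t => mul_nonneg (gfun_nonneg q t) ENNReal.toReal_nonneg
    · exact ((gfun_measurable q).mul hFmono.measurable).aestronglyMeasurable
  have hR2 : ∫⁻ t in Ioi (0:ℝ), ENNReal.ofReal (gfun q t * (μ (Iic t)).toReal)
      = ∫⁻ t in Ioi (0:ℝ), ENNReal.ofReal (gfun q t) * μ (Iio t) := by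
    refine setLIntegral_congr_fun measurableSet_Ioi (fun t ht => ?_)
    rw [ENNReal.ofReal_mul (gfun_nonneg q t), ENNReal.ofReal_toReal (measure_ne_top μ _), hIic]
  have hR3 : ∫⁻ t, G t * μ (Iio t)
      = ∫⁻ t in Ioi (0:ℝ), G t * μ (Iio t) := by
    rw [← lintegral_indicator measurableSet_Ioi]
    refine lintegral_congr fun t => ?_
    by_cases ht : t ∈ Ioi (0:ℝ)
    · simp [ht]
    · have ht' : t ≤ 0 := not_lt.mp ht
      simp [Set.indicator_apply, ht, hGdef, gfun_zero_of_nonpos q ht']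
  have hR4 : ∫⁻ t in Ioi (0:ℝ), G t * μ (Iio t)
      = ∫⁻ t in Ioi (0:ℝ), ENNReal.ofReal c * (ENNReal.ofReal (gfun q t) * μ (Iio t)) := by
    refine setLIntegral_congr_fun measurableSet_Ioi (fun t ht => ?_)
    simp only [hGdef]
    rw [ENNReal.ofReal_mul hc0, mul_assoc]
  calc (∫ ω, p * gaussQ (Real.sqrt (2 * q * X ω)) ∂P)
      = (∫⁻ ω, ENNReal.ofReal (p * gaussQ (Real.sqrt (2 * q * X ω))) ∂P).toReal :=
        integral_eq_lintegral_of_nonneg_ae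
          (ae_of_all _ fun ω => mul_nonneg hp.le (gaussQ_nonneg _)) hQmeas.aestronglyMeasurable
    _ = (∫⁻ x, ENNReal.ofReal (p * gaussQ (Real.sqrt (2 * q * x))) ∂μ).toReal := by
        rw [hμdef, lintegral_map hQmeas' hXmeas]
    _ = (∫⁻ x, (∫⁻ t in Ioi x, G t) ∂μ).toReal := by
        congr 1
        refine lintegral_congr_ae ?_
        filter_upwards [haenn] with x hx
        rw [keyLemma p q hp hq hx]
    _ = (∫⁻ t, G t * μ (Iio t)).toReal := by
        congr 1
        have e1 : ∀ x : ℝ, (∫⁻ t in Ioi x, G t) = ∫⁻ t, (Ioi x).indicator G t := fun x =>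
          (lintegral_indicator measurableSet_Ioi _).symm
        simp_rw [e1]
        rw [lintegral_lintegral_swap]
        · refine lintegral_congr fun t => ?_
          have e2 : ∀ x : ℝ, (Ioi x).indicator G t = (Iio t).indicator (fun _ => G t) x := by
            intro x
            by_cases h : x < t <;> simp [Set.indicator_apply, h, mem_Ioi, mem_Iio]
          simp_rw [e2]
          rw [lintegral_indicator measurableSet_Iio, setLIntegral_const]
        · have e3 : Function.uncurry (fun x t : ℝ => (Ioi x).indicator G t)
              = {z : ℝ × ℝ | z.1 < z.2}.indicator (fun z => G z.2) := by
            ext z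
            by_cases h : z.1 < z.2 <;>
              simp [Function.uncurry, Set.indicator_apply, mem_Ioi, h]
          rw [e3]
          exact ((hGmeas.comp measurable_snd).indicator
            (measurableSet_lt measurable_fst measurable_snd)).aemeasurable
    _ = c * ∫ t in Ioi (0:ℝ),
          Real.exp (-q * t) * t ^ (-(1 : ℝ) / 2) * (P {ω | X ω ≤ t}).toReal := by
        have hmeasI : Measurable fun t : ℝ => ENNReal.ofReal (gfun q t) * μ (Iio t) :=
          (gfun_measurable q).ennreal_ofReal.mul hμIio_meas
        rw [hR3, hR4, lintegral_const_mul _ hmeasI,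
          ENNReal.toReal_mul, ENNReal.toReal_ofReal hc0, hR1, hR2]
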